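/- Let {X_n}_{n∈ℕ₀} be a stochastic process adapted to a filtration {F_n}, X_0 constant, with E[X_{n+1}|F_n] ≤ X_n − ε a.s. (ε > 0) and X_{n+1} − X_n ∈ [a,b] a.s. (a < b). Let {B_n}_{n∈ℕ₀} be a strictly increasing sequence of ℕ₀-valued random variables with B_n ≥ n a.s. Then for any c ∈ ℝ, P(X_{B_n} ≥ c) ≤ Σ_{k=n}^{∞} P(X_k ≥ c), and consequently lim_{n→∞} P(X_{B_n} ≥ c) = 0. -/

import Mathlib

open MeasureTheory Filter Topology

lemma stmt12_exists_t (a b ε : ℝ) (hab : a < b) (hε : 0 < ε) :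
    ∃ t : ℝ, 0 < t ∧
      ((b + ε) * Real.exp (t * a) - (a + ε) * Real.exp (t * b)) / (b - a) < 1 := by
  set g : ℝ → ℝ := fun t => ((b + ε) * Real.exp (t * a) - (a + ε) * Real.exp (t * b)) / (b - a)
    with hg_def
  have hba : (0:ℝ) < b - a := sub_pos.2 hab
  have hg0 : g 0 = 1 := by
    simp only [hg_def, zero_mul, Real.exp_zero, mul_one]
    rw [div_eq_one_iff_eq hba.ne']
    ring
  have hderiv : HasDerivAt g (-ε) 0 := by
    have h1 : HasDerivAt (fun t : ℝ => Real.exp (t * a)) (Real.exp (0 * a) * a) 0 :=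
      (hasDerivAt_mul_const a).exp
    have h2 : HasDerivAt (fun t : ℝ => Real.exp (t * b)) (Real.exp (0 * b) * b) 0 :=
      (hasDerivAt_mul_const b).exp
    have h := ((h1.const_mul (b + ε)).sub (h2.const_mul (a + ε))).div_const (b - a)
    refine h.congr_deriv ?_
    simp only [zero_mul, Real.exp_zero, one_mul]
    field_simp
    ring
  have hslope := hasDerivAt_iff_tendsto_slope.mp hderiv
  have hslope' : Tendsto (slope g 0) (𝓝[>] (0:ℝ)) (𝓝 (-ε)) :=
    hslope.mono_left (nhdsWithin_mono _ (fun x hx => ne_of_gt hx))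
  have hev : ∀ᶠ t in 𝓝[>] (0:ℝ), slope g 0 t < 0 :=
    hslope' (Iio_mem_nhds (by linarith))
  obtain ⟨t, hts, ht0⟩ := (hev.and self_mem_nhdsWithin).exists
  refine ⟨t, ht0, ?_⟩
  have h2 : (g t - g 0) / (t - 0) < 0 := by
    simpa [slope_def_field, div_eq_iff] using hts
  rw [hg0] at h2
  rcases div_neg_iff.mp h2 with ⟨u1, u2⟩ | ⟨u1, u2⟩
  · linarith
  · linarith


/-- Let `{X n}` be a stochastic process adapted to a filtration `ℱ`, with `X 0`
constant, `E[X (n+1) | ℱ n] ≤ X n - ε` a.s. (`ε > 0`) and `X (n+1) - X n ∈ [a, b]` a.s.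
(`a < b`).  Let `{B n}` be a strictly increasing sequence of `ℕ`-valued random variables with
`B n ≥ n` a.s.  Then for any `c ∈ ℝ`, `P(X (B n) ≥ c) ≤ ∑_{k=n}^∞ P(X k ≥ c)` and
consequently `lim_{n→∞} P(X (B n) ≥ c) = 0`. -/
theorem stmt12 {Ω : Type*} {m0 : MeasurableSpace Ω} {μ : Measure Ω} [IsProbabilityMeasure μ]
    (ℱ : Filtration ℕ m0) (X : ℕ → Ω → ℝ) (a b ε x0 : ℝ)
    (hab : a < b) (hε : 0 < ε)
    (hsm : Supermartingale X ℱ μ)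
    (hX0 : ∀ ω, X 0 ω = x0)
    (hdec : ∀ n, μ[X (n + 1)|ℱ n] ≤ᵐ[μ] fun ω => X n ω - ε)
    (hdiff : ∀ n, ∀ᵐ ω ∂μ, X (n + 1) ω - X n ω ∈ Set.Icc a b)
    (B : ℕ → Ω → ℕ)
    (hBmeas : ∀ n, Measurable (B n))
    (hBmono : ∀ᵐ ω ∂μ, StrictMono fun n => B n ω)
    (hBge : ∀ n, ∀ᵐ ω ∂μ, n ≤ B n ω) :
    ∀ c : ℝ,
      (∀ n : ℕ, μ {ω | c ≤ X (B n ω) ω} ≤ ∑' k : ℕ, μ {ω | c ≤ X (n + k) ω}) ∧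
      Tendsto (fun n : ℕ => μ {ω | c ≤ X (B n ω) ω}) atTop (𝓝 (0 : ENNReal)) := by
  intro c
  have hba : (0:ℝ) < b - a := sub_pos.2 hab
  -- a ≤ -ε
  have haε : a ≤ -ε := by
    have hD_int : Integrable (fun ω => X 1 ω - X 0 ω) μ :=
      (hsm.integrable 1).sub (hsm.integrable 0)
    have h1 : a ≤ ∫ ω, (X 1 ω - X 0 ω) ∂μ := by
      have := integral_mono_ae (integrable_const a) hD_int
        (by filter_upwards [hdiff 0] with ω hω using hω.1)
      simpa using this
    have h2 : ∫ ω, X 1 ω ∂μ ≤ ∫ ω, X 0 ω ∂μ - ε := by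
      have hcond : ∫ ω, (μ[X 1|ℱ 0]) ω ∂μ = ∫ ω, X 1 ω ∂μ :=
        integral_condExp (ℱ.le 0)
      have := integral_mono_ae integrable_condExp
        ((hsm.integrable 0).sub (integrable_const ε)) (hdec 0)
      rw [hcond] at this
      simpa [integral_sub (hsm.integrable 0) (integrable_const ε)] using this
    rw [integral_sub (hsm.integrable 1) (hsm.integrable 0)] at h1
    linarith
  -- boundedness of each X k
  have hbdd : ∀ k, ∃ M : ℝ, ∀ᵐ ω ∂μ, |X k ω| ≤ M := by
    intro k
    induction k with
    | zero => exact ⟨|x0|, ae_of_all _ fun ω => by rw [hX0]⟩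
    | succ k ih =>
      obtain ⟨M, hM⟩ := ih
      refine ⟨M + max |a| |b|, ?_⟩
      filter_upwards [hM, hdiff k] with ω h1 h2
      have hD : |X (k+1) ω - X k ω| ≤ max |a| |b| := by
        rw [abs_le]
        constructor
        · have : -|a| ≤ a := neg_abs_le a
          have := h2.1
          have := le_max_left |a| |b|
          linarith
        · have : b ≤ |b| := le_abs_self b
          have := h2.2
          have := le_max_right |a| |b|
          linarith
      calc |X (k+1) ω| = |X k ω + (X (k+1) ω - X k ω)| := by ring_nf
        _ ≤ |X k ω| + |X (k+1) ω - X k ω| := abs_add_le _ _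
        _ ≤ M + max |a| |b| := add_le_add h1 hD
  obtain ⟨t, ht, hq1⟩ := stmt12_exists_t a b ε hab hε
  set q : ℝ := ((b + ε) * Real.exp (t * a) - (a + ε) * Real.exp (t * b)) / (b - a) with hq_def
  set α : ℝ := (b * Real.exp (t * a) - a * Real.exp (t * b)) / (b - a) with hα_def
  set β : ℝ := (Real.exp (t * b) - Real.exp (t * a)) / (b - a) with hβ_def
  have hβ0 : 0 ≤ β := by
    have : Real.exp (t * a) ≤ Real.exp (t * b) :=
      Real.exp_le_exp.2 (mul_le_mul_of_nonneg_left hab.le ht.le)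
    exact div_nonneg (by linarith) hba.le
  have hqαβ : q = α - ε * β := by rw [hq_def, hα_def, hβ_def]; field_simp; ring
  have hq0 : 0 < q := by
    have hqe : q = Real.exp (t * a) + (a + ε) * (Real.exp (t * a) - Real.exp (t * b)) / (b - a) := by
      rw [hq_def]; field_simp; ring
    have h1 : Real.exp (t * a) ≤ Real.exp (t * b) :=
      Real.exp_le_exp.2 (mul_le_mul_of_nonneg_left hab.le ht.le)
    have h2 : 0 ≤ (a + ε) * (Real.exp (t * a) - Real.exp (t * b)) / (b - a) :=
      div_nonneg (by nlinarith) hba.le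
    have := Real.exp_pos (t * a)
    linarith [hqe ▸ (by linarith : 0 < Real.exp (t * a) + (a + ε) * (Real.exp (t * a) - Real.exp (t * b)) / (b - a))]
  set F : ℕ → Ω → ℝ := fun k ω => Real.exp (t * X k ω) with hF_def
  have hF_meas : ∀ k, StronglyMeasurable (F k) := fun k =>
    Real.continuous_exp.comp_stronglyMeasurable
      (stronglyMeasurable_const.mul ((hsm.stronglyAdapted k).mono (ℱ.le k)))
  have hF_nonneg : ∀ k ω, 0 ≤ F k ω := fun k ω => (Real.exp_pos _).le
  have hF_bound : ∀ k, ∃ M : ℝ, ∀ᵐ ω ∂μ, ‖F k ω‖ ≤ M := by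
    intro k
    obtain ⟨M, hM⟩ := hbdd k
    refine ⟨Real.exp (|t| * M), ?_⟩
    filter_upwards [hM] with ω h
    rw [Real.norm_eq_abs, abs_of_pos (Real.exp_pos _)]
    refine Real.exp_le_exp.2 ?_
    calc t * X k ω ≤ |t * X k ω| := le_abs_self _
      _ = |t| * |X k ω| := abs_mul _ _
      _ ≤ |t| * M := mul_le_mul_of_nonneg_left h (abs_nonneg t)
  have hF_int : ∀ k, Integrable (F k) μ := by
    intro k
    obtain ⟨M, hM⟩ := hF_bound k
    exact (integrable_const M).mono' (hF_meas k).aestronglyMeasurable hM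
  -- convexity bound
  have hconv : ∀ d ∈ Set.Icc a b, Real.exp (t * d) ≤ α + β * d := by
    rintro d ⟨hd1, hd2⟩
    have hu : (0:ℝ) ≤ (b - d) / (b - a) := div_nonneg (by linarith) hba.le
    have hv : (0:ℝ) ≤ (d - a) / (b - a) := div_nonneg (by linarith) hba.le
    have huv : (b - d) / (b - a) + (d - a) / (b - a) = 1 := by field_simp; ring
    have h := convexOn_exp.2 (Set.mem_univ (t * a)) (Set.mem_univ (t * b)) hu hv huv
    simp only [smul_eq_mul] at h
    have harg : (b - d) / (b - a) * (t * a) + (d - a) / (b - a) * (t * b) = t * d := by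
      field_simp; ring
    rw [harg] at h
    have hrhs : (b - d) / (b - a) * Real.exp (t * a) + (d - a) / (b - a) * Real.exp (t * b)
        = α + β * d := by
      rw [hα_def, hβ_def]; field_simp; ring
    linarith [hrhs ▸ h]
  -- key one-step estimate
  have key : ∀ k, ∫ ω, F (k+1) ω ∂μ ≤ q * ∫ ω, F k ω ∂μ := by
    intro k
    set D : Ω → ℝ := fun ω => X (k+1) ω - X k ω with hD_def
    have hD_int : Integrable D μ := (hsm.integrable (k+1)).sub (hsm.integrable k)
    obtain ⟨M, hM⟩ := hF_bound k
    have hFD_int : Integrable (fun ω => F k ω * D ω) μ :=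
      hD_int.bdd_mul (hF_meas k).aestronglyMeasurable hM
    have hFsplit : ∀ ω, F (k+1) ω = F k ω * Real.exp (t * D ω) := by
      intro ω
      rw [hF_def]
      simp only [hD_def, ← Real.exp_add]
      ring_nf
    -- conditional expectation of D
    have hDcond : (μ[D|ℱ k]) ≤ᵐ[μ] fun _ => -ε := by
      have h1 : μ[D|ℱ k] =ᵐ[μ] μ[X (k+1)|ℱ k] - μ[X k|ℱ k] :=
        condExp_sub (hsm.integrable (k+1)) (hsm.integrable k) _
      have h2 : μ[X k|ℱ k] = X k :=
        condExp_of_stronglyMeasurable (ℱ.le k) (hsm.stronglyAdapted k) (hsm.integrable k)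
      filter_upwards [h1, hdec k] with ω e1 e3
      have e1' : (μ[D|ℱ k]) ω = (μ[X (k+1)|ℱ k]) ω - (μ[X k|ℱ k]) ω := e1
      rw [e1', congrFun h2 ω]
      have : (μ[X (k+1)|ℱ k]) ω ≤ X k ω - ε := e3
      linarith
    have hpull : μ[fun ω => F k ω * D ω|ℱ k] =ᵐ[μ] fun ω => F k ω * (μ[D|ℱ k]) ω := by
      have hFkm : StronglyMeasurable[ℱ k] (F k) :=
        Real.continuous_exp.comp_stronglyMeasurable
          (stronglyMeasurable_const.mul (hsm.stronglyAdapted k))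
      exact condExp_mul_of_stronglyMeasurable_left hFkm hFD_int hD_int
    have hFmucond_int : Integrable (fun ω => F k ω * (μ[D|ℱ k]) ω) μ :=
      integrable_condExp.bdd_mul (hF_meas k).aestronglyMeasurable hM
    have hFD_le : ∫ ω, F k ω * D ω ∂μ ≤ -ε * ∫ ω, F k ω ∂μ := by
      calc ∫ ω, F k ω * D ω ∂μ = ∫ ω, (μ[fun ω => F k ω * D ω|ℱ k]) ω ∂μ :=
            (integral_condExp (ℱ.le k)).symm
        _ = ∫ ω, F k ω * (μ[D|ℱ k]) ω ∂μ := integral_congr_ae hpull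
        _ ≤ ∫ ω, -ε * F k ω ∂μ := by
            refine integral_mono_ae hFmucond_int ((hF_int k).const_mul _) ?_
            filter_upwards [hDcond] with ω h
            calc F k ω * (μ[D|ℱ k]) ω ≤ F k ω * (-ε) :=
                  mul_le_mul_of_nonneg_left h (hF_nonneg k ω)
              _ = -ε * F k ω := by ring
        _ = -ε * ∫ ω, F k ω ∂μ := integral_const_mul _ _
    have hmono : ∫ ω, F (k+1) ω ∂μ ≤ ∫ ω, (α * F k ω + β * (F k ω * D ω)) ∂μ := by
      refine integral_mono_ae ?_ ?_ ?_
      · exact hF_int (k+1)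
      · exact ((hF_int k).const_mul α).add (hFD_int.const_mul β)
      · filter_upwards [hdiff k] with ω hω
        rw [hFsplit ω]
        have h := hconv (D ω) hω
        have h2 : F k ω * Real.exp (t * D ω) ≤ F k ω * (α + β * D ω) :=
          mul_le_mul_of_nonneg_left h (hF_nonneg k ω)
        calc F k ω * Real.exp (t * D ω) ≤ F k ω * (α + β * D ω) := h2
          _ = α * F k ω + β * (F k ω * D ω) := by ring
    have hsplit2 : ∫ ω, (α * F k ω + β * (F k ω * D ω)) ∂μ
        = α * ∫ ω, F k ω ∂μ + β * ∫ ω, F k ω * D ω ∂μ := by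
      rw [integral_add ((hF_int k).const_mul α) (hFD_int.const_mul β),
        integral_const_mul, integral_const_mul]
    have hβmul : β * ∫ ω, F k ω * D ω ∂μ ≤ β * (-ε * ∫ ω, F k ω ∂μ) :=
      mul_le_mul_of_nonneg_left hFD_le hβ0
    calc ∫ ω, F (k+1) ω ∂μ ≤ α * ∫ ω, F k ω ∂μ + β * ∫ ω, F k ω * D ω ∂μ := by
          rw [← hsplit2]; exact hmono
      _ ≤ α * ∫ ω, F k ω ∂μ + β * (-ε * ∫ ω, F k ω ∂μ) := by linarith
      _ = q * ∫ ω, F k ω ∂μ := by rw [hqαβ]; ring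
  -- iterate
  have hE : ∀ k, ∫ ω, F k ω ∂μ ≤ Real.exp (t * x0) * q ^ k := by
    intro k
    induction k with
    | zero =>
      have : F 0 = fun _ => Real.exp (t * x0) := funext fun ω => by rw [hF_def]; simp [hX0]
      rw [this]
      simp
    | succ k ih =>
      calc ∫ ω, F (k+1) ω ∂μ ≤ q * ∫ ω, F k ω ∂μ := key k
        _ ≤ q * (Real.exp (t * x0) * q ^ k) := mul_le_mul_of_nonneg_left ih hq0.le
        _ = Real.exp (t * x0) * q ^ (k + 1) := by ring
  -- Markov bound
  have hMar : ∀ k, μ {ω | c ≤ X k ω} ≤ ENNReal.ofReal (Real.exp (t * (x0 - c)) * q ^ k) := by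
    intro k
    have hset : {ω | c ≤ X k ω} = {ω | Real.exp (t * c) ≤ F k ω} := by
      ext ω
      simp only [Set.mem_setOf_eq, hF_def, Real.exp_le_exp, mul_le_mul_iff_right₀ ht]
    have hmar := mul_meas_ge_le_integral_of_nonneg
      (ae_of_all _ fun ω => hF_nonneg k ω) (hF_int k) (Real.exp (t * c))
    have htoReal : (μ {ω | c ≤ X k ω}).toReal ≤ Real.exp (t * (x0 - c)) * q ^ k := by
      rw [hset]
      have hE' := hE k
      have hpos := Real.exp_pos (t * c)
      have : (μ {ω | Real.exp (t * c) ≤ F k ω}).toReal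
          ≤ Real.exp (t * x0) * q ^ k / Real.exp (t * c) := by
        rw [le_div_iff₀ hpos]
        calc (μ {ω | Real.exp (t * c) ≤ F k ω}).toReal * Real.exp (t * c)
            = Real.exp (t * c) * (μ {ω | Real.exp (t * c) ≤ F k ω}).toReal := by ring
          _ ≤ ∫ ω, F k ω ∂μ := hmar
          _ ≤ Real.exp (t * x0) * q ^ k := hE'
      calc (μ {ω | Real.exp (t * c) ≤ F k ω}).toReal
          ≤ Real.exp (t * x0) * q ^ k / Real.exp (t * c) := this
        _ = Real.exp (t * (x0 - c)) * q ^ k := by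
            rw [mul_comm (Real.exp (t * x0)) (q ^ k), mul_div_assoc, ← Real.exp_sub]
            ring_nf
    calc μ {ω | c ≤ X k ω} = ENNReal.ofReal ((μ {ω | c ≤ X k ω}).toReal) :=
          (ENNReal.ofReal_toReal (measure_ne_top μ _)).symm
      _ ≤ ENNReal.ofReal (Real.exp (t * (x0 - c)) * q ^ k) := ENNReal.ofReal_le_ofReal htoReal
  -- summability
  have hsummable : Summable (fun k => Real.exp (t * (x0 - c)) * q ^ k) :=
    (summable_geometric_of_lt_one hq0.le hq1).mul_left _
  have hsum_ne_top : (∑' k, μ {ω | c ≤ X k ω}) ≠ ⊤ := by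
    refine ne_top_of_le_ne_top ?_ (ENNReal.tsum_le_tsum hMar)
    rw [← ENNReal.ofReal_tsum_of_nonneg
      (fun k => mul_nonneg (Real.exp_pos _).le (pow_nonneg hq0.le k)) hsummable]
    exact ENNReal.ofReal_ne_top
  -- part 1
  have part1 : ∀ n : ℕ, μ {ω | c ≤ X (B n ω) ω} ≤ ∑' k : ℕ, μ {ω | c ≤ X (n + k) ω} := by
    intro n
    have hsub : μ {ω | c ≤ X (B n ω) ω} ≤ μ (⋃ k : ℕ, {ω | c ≤ X (n + k) ω}) := by
      refine measure_mono_ae ?_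
      filter_upwards [hBge n] with ω hω hc
      exact Set.mem_iUnion.2 ⟨B n ω - n, by
        simpa [Nat.add_sub_cancel' hω] using (show c ≤ X (B n ω) ω from hc)⟩
    exact hsub.trans (measure_iUnion_le _)
  refine ⟨part1, ?_⟩
  -- part 2
  have htail : Tendsto (fun n : ℕ => ∑' k : ℕ, μ {ω | c ≤ X (n + k) ω}) atTop (𝓝 0) := by
    have h := ENNReal.tendsto_sum_nat_add (fun k => μ {ω | c ≤ X k ω}) hsum_ne_top
    convert h using 2 with n
    exact tsum_congr fun k => by rw [add_comm]
  exact tendsto_of_tendsto_of_tendsto_of_le_of_le tendsto_const_nhds htail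
    (fun n => zero_le) part1
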